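/- For $b, \beta, m > 0$, $\int_{-\pi/(2\sqrt{\beta})}^{\pi/(2\sqrt{\beta})} \exp\left(-\frac{b}{2\beta m}\tan^2(\sqrt{\beta} p)\right) dp = \frac{\pi}{\sqrt{\beta}}\, e^{b/(2\beta m)}\, \mathrm{erfc}\left(\sqrt{\frac{b}{2\beta m}}\right)$, where $\mathrm{erfc}(x) = \frac{2}{\sqrt{\pi}}\int_x^\infty e^{-t^2} dt$. -/

import Mathlib

noncomputable def erfc' (x : ℝ) : ℝ :=
  2 / Real.sqrt Real.pi * ∫ t in Set.Ioi x, Real.exp (-t ^ 2)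

open MeasureTheory Set Real

-- inner s-integral
lemma inner_s (c : ℝ) (hc : 0 < c) :
    ∫ s in Ioi (0:ℝ), Real.exp (-(c * s)) = 1 / c := by
  have := integral_comp_mul_left_Ioi (fun x => Real.exp (-x)) 0 hc
  simp only [mul_zero] at this
  rw [this, integral_exp_neg_Ioi_zero]
  simp [smul_eq_mul]

-- Fubini integrability
set_option maxHeartbeats 1000000 in
lemma F_integrable (a : ℝ) (ha : 0 < a) :
    Integrable (Function.uncurry fun t s => Real.exp (-a * t ^ 2) * Real.exp (-((1 + t ^ 2) * s)))
      (volume.prod (volume.restrict (Ioi (0:ℝ)))) := by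
  have hmeas : AEStronglyMeasurable
      (Function.uncurry fun t s : ℝ => Real.exp (-a * t ^ 2) * Real.exp (-((1 + t ^ 2) * s)))
      (volume.prod (volume.restrict (Ioi (0:ℝ)))) := by
    apply Continuous.aestronglyMeasurable
    fun_prop
  rw [integrable_prod_iff hmeas]
  constructor
  · filter_upwards with t
    simp only [Function.uncurry_apply_pair]
    have h1 : (0:ℝ) < 1 + t ^ 2 := by positivity
    have hI : IntegrableOn (fun s : ℝ => Real.exp (-((1 + t ^ 2) * s))) (Ioi 0) :=
      (exp_neg_integrableOn_Ioi 0 h1).congr_fun (fun s _ => by simp only [neg_mul]) measurableSet_Ioi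
    exact hI.const_mul _
  · simp only [Function.uncurry_apply_pair]
    have heq : ∀ t : ℝ, (∫ s in Ioi (0:ℝ),
        ‖Real.exp (-a * t ^ 2) * Real.exp (-((1 + t ^ 2) * s))‖) =
        Real.exp (-a * t ^ 2) * (1 / (1 + t ^ 2)) := by
      intro t
      have h1 : (0:ℝ) < 1 + t ^ 2 := by positivity
      rw [← inner_s (1 + t ^ 2) h1, ← integral_const_mul]
      congr 1 with s
      rw [norm_of_nonneg (by positivity)]
    simp only [heq]
    apply Integrable.mono' (integrable_exp_neg_mul_sq ha)
    · apply Continuous.aestronglyMeasurable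
      apply Continuous.mul (by fun_prop)
      exact continuous_const.div (by fun_prop) (fun x => by positivity)
    · filter_upwards with t
      have h1 : (0:ℝ) < 1 + t ^ 2 := by positivity
      rw [norm_of_nonneg (by positivity)]
      nth_rewrite 2 [← mul_one (Real.exp _)]
      gcongr
      rw [div_le_one h1]; nlinarith [sq_nonneg t]

-- image of sqrt shift
lemma sqrt_image (a : ℝ) (ha : 0 < a) :
    (fun s => Real.sqrt (a + s)) '' Ioi 0 = Ioi (Real.sqrt a) := by
  ext u
  simp only [mem_image, mem_Ioi]
  constructor
  · rintro ⟨s, hs, rfl⟩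
    exact Real.sqrt_lt_sqrt ha.le (by linarith)
  · intro hu
    have hu0 : 0 < u := lt_of_le_of_lt (Real.sqrt_nonneg a) hu
    refine ⟨u ^ 2 - a, ?_, ?_⟩
    · have h2 : a < u ^ 2 := by
        calc a = Real.sqrt a ^ 2 := (Real.sq_sqrt ha.le).symm
          _ < u ^ 2 := by nlinarith [Real.sqrt_nonneg a]
      linarith
    · rw [show a + (u ^ 2 - a) = u ^ 2 by ring, Real.sqrt_sq hu0.le]

-- the key integral
lemma key (a : ℝ) (ha : 0 < a) :
    (∫ t : ℝ, Real.exp (-a * t ^ 2) / (1 + t ^ 2))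
      = Real.pi * Real.exp a * erfc' (Real.sqrt a) := by
  have step1 : (∫ t : ℝ, Real.exp (-a * t ^ 2) / (1 + t ^ 2))
      = ∫ s in Ioi (0:ℝ), Real.exp (-s) * Real.sqrt (Real.pi / (a + s)) := by
    have lhs_eq : (∫ t : ℝ, Real.exp (-a * t ^ 2) / (1 + t ^ 2))
        = ∫ t : ℝ, ∫ s in Ioi (0:ℝ), Real.exp (-a * t ^ 2) * Real.exp (-((1 + t ^ 2) * s)) := by
      congr 1 with t
      have h1 : (0:ℝ) < 1 + t ^ 2 := by positivity
      rw [integral_const_mul, inner_s (1 + t ^ 2) h1, mul_one_div]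
    rw [lhs_eq, integral_integral_swap (F_integrable a ha)]
    congr 1 with s
    have : ∀ t : ℝ, Real.exp (-a * t ^ 2) * Real.exp (-((1 + t ^ 2) * s))
        = Real.exp (-s) * Real.exp (-(a + s) * t ^ 2) := by
      intro t
      rw [← Real.exp_add, ← Real.exp_add]
      ring_nf
    simp only [this]
    rw [integral_const_mul, integral_gaussian]
  rw [step1]
  -- substitute u = sqrt (a + s)
  have hderiv : ∀ s ∈ Ioi (0:ℝ),
      HasDerivWithinAt (fun s => Real.sqrt (a + s)) (1 / (2 * Real.sqrt (a + s))) (Ioi 0) s := by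
    intro s hs
    have h1 : a + s ≠ 0 := by simp only [mem_Ioi] at hs; positivity
    exact ((Real.hasDerivAt_sqrt h1).comp s ((hasDerivAt_id s).const_add a)).hasDerivWithinAt.congr_deriv (by simp)
  have hinj : InjOn (fun s => Real.sqrt (a + s)) (Ioi 0) := by
    intro s1 h1 s2 h2 heq
    simp only [mem_Ioi] at h1 h2
    have e1 : a + s1 = a + s2 := by
      have := congrArg (fun x => x ^ 2) heq
      simpa [Real.sq_sqrt, (by positivity : (0:ℝ) ≤ a + s1), (by positivity : (0:ℝ) ≤ a + s2)] using this
    linarith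
  have cov := integral_image_eq_integral_abs_deriv_smul measurableSet_Ioi hderiv hinj
    (fun u => 2 * Real.sqrt Real.pi * Real.exp a * Real.exp (-u ^ 2))
  rw [sqrt_image a ha] at cov
  have rhs_eq : (∫ s in Ioi (0:ℝ), Real.exp (-s) * Real.sqrt (Real.pi / (a + s)))
      = ∫ s in Ioi (0:ℝ), |1 / (2 * Real.sqrt (a + s))| •
          (2 * Real.sqrt Real.pi * Real.exp a * Real.exp (-Real.sqrt (a + s) ^ 2)) := by
    apply setIntegral_congr_fun measurableSet_Ioi
    intro s hs
    simp only [mem_Ioi] at hs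
    have h1 : (0:ℝ) < a + s := by positivity
    have h2 : (0:ℝ) < Real.sqrt (a + s) := Real.sqrt_pos.mpr h1
    simp only [smul_eq_mul, Real.sq_sqrt h1.le, abs_of_pos (show (0:ℝ) < 1 / (2 * Real.sqrt (a + s)) by positivity)]
    have he : Real.exp a * Real.exp (-(a + s)) = Real.exp (-s) := by
      rw [← Real.exp_add]; ring_nf
    rw [Real.sqrt_div Real.pi_nonneg, ← he]
    ring
  rw [rhs_eq, ← cov, integral_const_mul]
  unfold erfc'
  have hpi : Real.sqrt Real.pi ≠ 0 := by positivity
  field_simp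
  linear_combination (∫ u in Ioi (Real.sqrt a), Real.exp (-u ^ 2)) *
    (Real.mul_self_sqrt Real.pi_nonneg)


lemma tan_sub (a : ℝ) (ha : 0 < a) :
    (∫ u in Ioo (-(Real.pi / 2)) (Real.pi / 2), Real.exp (-a * Real.tan u ^ 2))
      = ∫ t : ℝ, Real.exp (-a * t ^ 2) / (1 + t ^ 2) := by
  have himg : Ioo (-(Real.pi / 2)) (Real.pi / 2) = Real.arctan '' univ := by
    rw [image_univ, Real.range_arctan]
  rw [himg, integral_image_eq_integral_abs_deriv_smul MeasurableSet.univ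
    (fun x _ => (Real.hasDerivAt_arctan x).hasDerivWithinAt)
    (Real.arctan_injective.injOn) (fun u => Real.exp (-a * Real.tan u ^ 2))]
  rw [setIntegral_univ]
  congr 1 with x
  have h1 : (0:ℝ) < 1 + x ^ 2 := by positivity
  rw [smul_eq_mul, Real.tan_arctan, abs_of_pos (by positivity)]
  ring

theorem gup_classical_partition_integral (b β m : ℝ) (hb : 0 < b)
    (hβ : 0 < β) (hm : 0 < m) :
    ∫ p in Set.Ioo (-(Real.pi / (2 * Real.sqrt β))) (Real.pi / (2 * Real.sqrt β)),
        Real.exp (-(b / (2 * β * m)) * Real.tan (Real.sqrt β * p) ^ 2)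
      = (Real.pi / Real.sqrt β) * Real.exp (b / (2 * β * m)) *
          erfc' (Real.sqrt (b / (2 * β * m))) := by
  set a := b / (2 * β * m) with ha_def
  have ha : 0 < a := by positivity
  set s0 := Real.sqrt β with hs0_def
  have hs0 : 0 < s0 := Real.sqrt_pos.mpr hβ
  have hle : -(Real.pi / (2 * s0)) ≤ Real.pi / (2 * s0) := by
    have : 0 < Real.pi / (2 * s0) := by positivity
    linarith
  rw [← integral_Ioc_eq_integral_Ioo, ← intervalIntegral.integral_of_le hle,
    intervalIntegral.integral_comp_mul_left (fun u => Real.exp (-a * Real.tan u ^ 2)) hs0.ne']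
  have e1 : s0 * -(Real.pi / (2 * s0)) = -(Real.pi / 2) := by field_simp
  have e2 : s0 * (Real.pi / (2 * s0)) = Real.pi / 2 := by field_simp
  rw [e1, e2, intervalIntegral.integral_of_le (by linarith [Real.pi_pos] : -(Real.pi/2) ≤ Real.pi/2),
    integral_Ioc_eq_integral_Ioo, tan_sub a ha, key a ha]
  rw [smul_eq_mul]
  ring
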